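/- Suppose C_I < βA/((μ+r)(μ+r+ρ)), D1 := (R0 − p − q)² − 4pq > 0, and let S1 = ((μ+β+ρ)/(2σm))·(R0 − p + q − √D1). If 0 < S1 < a, where a = ((μ+β+ρ)/σm)·(R0 − M), then A/S1 − σm·S1 + μ + β + ρ > 0. -/

import Mathlib

/-- Under the capacity condition, if `0 < S1 < a`, then
`A/S1 − σm·S1 + μ + β + ρ > 0`. -/
theorem stmt18 (A μ ρ r β σm σs CI : ℝ)
    (hA : 0 < A) (hμ : 0 < μ) (hρ : 0 < ρ) (hr : 0 < r) (hβ : 0 < β)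
    (hσm : 0 < σm) (hσs : 0 < σs) (hCI : 0 < CI)
    (R0 p q M : ℝ)
    (hR0 : R0 = A * σm / (μ * (μ + β + ρ)))
    (hp : p = (μ + r) * σm * σs * CI / (μ * (μ * σm + β * σs)))
    (hq : q = μ * σm / (μ * σm + β * σs))
    (hM : M = σm * (μ + r) * CI / (μ * β))
    (hsmall : CI < β * A / ((μ + r) * (μ + r + ρ)))
    (D1 : ℝ) (hD1 : D1 = (R0 - p - q) ^ 2 - 4 * p * q) (hD1pos : 0 < D1)
    (S1 : ℝ) (hS1 : S1 = (μ + β + ρ) / (2 * σm) * (R0 - p + q - Real.sqrt D1))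
    (a : ℝ) (ha : a = (μ + β + ρ) / σm * (R0 - M))
    (hS1pos : 0 < S1) (hS1a : S1 < a) :
    0 < A / S1 - σm * S1 + μ + β + ρ := by
  have hden : 0 < μ * σm + β * σs := by positivity
  have hmbr : 0 < μ + β + ρ := by positivity
  have hq1 : q < 1 := by
    rw [hq, div_lt_one hden]; nlinarith
  have hpM : p = M * (1 - q) := by
    rw [hp, hq, hM]
    field_simp
    ring
  -- main claim : σm * S1 ≤ μ + β + ρ
  have hkey : σm * S1 ≤ μ + β + ρ := by
    rcases lt_or_ge R0 (M + 1) with hcase | hcase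
    · -- S1 < a and σm * a = (μ+β+ρ)*(R0 - M) ≤ μ+β+ρ
      have haa : σm * a = (μ + β + ρ) * (R0 - M) := by
        rw [ha]; field_simp
      nlinarith
    · -- f(1) ≤ 0, so the smaller root is ≤ 1
      have hB : 1 + q * R0 ≤ R0 - p + q := by
        rw [hpM]; nlinarith
      have hD1' : D1 = (R0 - p + q) ^ 2 - 4 * q * R0 := by rw [hD1]; ring
      have hsq : (R0 - p + q - 2) ^ 2 ≤ D1 := by rw [hD1']; nlinarith
      have hsqrt : R0 - p + q - 2 ≤ Real.sqrt D1 := by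
        rcases le_or_gt (R0 - p + q - 2) 0 with h | h
        · exact h.trans (Real.sqrt_nonneg _)
        · calc R0 - p + q - 2 = Real.sqrt ((R0 - p + q - 2) ^ 2) :=
                (Real.sqrt_sq h.le).symm
            _ ≤ Real.sqrt D1 := Real.sqrt_le_sqrt hsq
      have hval : σm * S1 = (μ + β + ρ) * (R0 - p + q - Real.sqrt D1) / 2 := by
        rw [hS1]; field_simp
      have hX : R0 - p + q - Real.sqrt D1 ≤ 2 := by linarith
      have := mul_le_mul_of_nonneg_left hX hmbr.le
      linarith
  have hpos : 0 < A / S1 := div_pos hA hS1pos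
  linarith
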